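/- Under the abstract edge-operator hypotheses, assume G is connected, fix a spanning tree T of G with a root vertex r, and for each vertex j let ω^j be the unique path in T from r to j; for an edge e traversed from u to v let ζ^e = ω^u ∘ e ∘ ω̄^v (a loop based at r). Then for every loop ζ of length s, writing e^t for the t-th edge of ζ (traversed from ζ(t−1) to ζ(t)), one has A(ζ) = A(ζ^{e^1}) A(ζ^{e^2}) ⋯ A(ζ^{e^s}); moreover A(ζ^e) = I whenever e ∈ T. Consequently every loop operator A(ζ) belongs to the subgroup generated by the fundamental loop operators {A(ζ^e) : e ∈ E, e ∉ T}. -/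

import Mathlib

open Matrix

/-- The operator of a path `ζ(0), …, ζ(s)`:
`A(ζ) = i^s A_{ζ(0)ζ(1)} A_{ζ(1)ζ(2)} ⋯ A_{ζ(s-1)ζ(s)}`. -/
noncomputable def pathOp {V : Type*} {N : ℕ}
    (A : V → V → Matrix (Fin N) (Fin N) ℂ) (s : ℕ) (ζ : ℕ → V) :
    Matrix (Fin N) (Fin N) ℂ :=
  (Complex.I ^ s) • (((List.range s).map (fun t => A (ζ t) (ζ (t + 1)))).prod)

/-- `ζ(0), …, ζ(s)` is a path in the graph `G`. -/
def IsPathIn {V : Type*} (G : SimpleGraph V) (s : ℕ) (ζ : ℕ → V) : Prop :=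
  ∀ t < s, G.Adj (ζ t) (ζ (t + 1))

/-- The fundamental loop `ζ^e = ω^u ∘ e ∘ ω̄^v` associated with an edge traversed from `u`
to `v`: follow the tree path `ω^u` from the root to `u`, cross the edge to `v`, then follow
the reversed tree path `ω̄^v` from `v` back to the root.  Its length is `len u + 1 + len v`. -/
def fundLoop {V : Type*} (len : V → ℕ) (ω : V → ℕ → V) (u v : V) : ℕ → V :=
  fun t => if t ≤ len u then ω u t else ω v (len v - (t - (len u + 1)))

section Aux
variable {V : Type*} [DecidableEq V] {N : ℕ} (A : V → V → Matrix (Fin N) (Fin N) ℂ)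
set_option linter.unusedSectionVars false
set_option linter.unusedVariables false

lemma pathOp_zero (ζ : ℕ → V) : pathOp A 0 ζ = 1 := by
  simp [pathOp]

lemma pathOp_succ_back (s : ℕ) (ζ : ℕ → V) :
    pathOp A (s+1) ζ = pathOp A s ζ * (Complex.I • A (ζ s) (ζ (s+1))) := by
  rw [pathOp, pathOp, List.range_succ, List.map_append, List.prod_append,
    List.map_singleton, List.prod_singleton, smul_mul_smul_comm, pow_succ]

lemma pathOp_succ_front (s : ℕ) (ζ : ℕ → V) :
    pathOp A (s+1) ζ = (Complex.I • A (ζ 0) (ζ 1)) * pathOp A s (fun t => ζ (t+1)) := by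
  rw [pathOp, pathOp, List.range_succ_eq_map, List.map_cons, List.prod_cons,
    smul_mul_smul_comm, List.map_map, pow_succ, mul_comm (Complex.I ^ s) Complex.I]
  rfl

variable {G : SimpleGraph V}

lemma edge_cancel (hsq : ∀ j k, G.Adj j k → A j k * A j k = 1)
    (hanti : ∀ j k, G.Adj j k → A k j = - A j k)
    {x z : V} (h : G.Adj x z) :
    (Complex.I • A x z) * (Complex.I • A z x) = 1 := by
  rw [smul_mul_smul_comm, Complex.I_mul_I, hanti x z h]
  simp [hsq x z h]

lemma rev_mul (hsq : ∀ j k, G.Adj j k → A j k * A j k = 1)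
    (hanti : ∀ j k, G.Adj j k → A k j = - A j k) :
    ∀ (s : ℕ) (ζ : ℕ → V), IsPathIn G s ζ →
      pathOp A s (fun t => ζ (s - t)) * pathOp A s ζ = 1 := by
  intro s
  induction s with
  | zero => intro ζ _; simp [pathOp]
  | succ s ih =>
    intro ζ hζ
    have hrev : pathOp A (s+1) (fun t => ζ (s+1-t))
        = (Complex.I • A (ζ (s+1)) (ζ s)) * pathOp A s (fun t => ζ (s - t)) := by
      rw [pathOp_succ_front]
      have : (fun t => ζ (s + 1 - (t + 1))) = (fun t => ζ (s - t)) := by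
        funext t; congr 1; omega
      rw [this]
      rfl
    rw [hrev, pathOp_succ_back]
    have h1 : pathOp A s (fun t => ζ (s - t)) * pathOp A s ζ = 1 :=
      ih ζ (fun t ht => hζ t (Nat.lt_succ_of_lt ht))
    calc (Complex.I • A (ζ (s+1)) (ζ s)) * pathOp A s (fun t => ζ (s - t)) *
          (pathOp A s ζ * (Complex.I • A (ζ s) (ζ (s+1))))
        = (Complex.I • A (ζ (s+1)) (ζ s)) *
            (pathOp A s (fun t => ζ (s - t)) * pathOp A s ζ) *
            (Complex.I • A (ζ s) (ζ (s+1))) := by simp only [mul_assoc]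
      _ = (Complex.I • A (ζ (s+1)) (ζ s)) * (Complex.I • A (ζ s) (ζ (s+1))) := by
            rw [h1, mul_one]
      _ = 1 := edge_cancel A hsq hanti ((hζ s (Nat.lt_succ_self s)).symm)

lemma fund_decomp (len : V → ℕ) (ω : V → ℕ → V) (u v : V)
    (hu : ω u (len u) = u) (hv : ω v (len v) = v) :
    pathOp A (len u + 1 + len v) (fundLoop len ω u v)
      = pathOp A (len u) (ω u) * (Complex.I • A u v) *
        pathOp A (len v) (fun t => ω v (len v - t)) := by
  have e1 : List.map (fun t => A (fundLoop len ω u v t) (fundLoop len ω u v (t+1)))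
        (List.range (len u))
      = List.map (fun t => A (ω u t) (ω u (t+1))) (List.range (len u)) := by
    apply List.map_congr_left
    intro t ht
    rw [List.mem_range] at ht
    simp only [fundLoop]
    rw [if_pos (by omega : t ≤ len u), if_pos (by omega : t + 1 ≤ len u)]
  have e2 : A (fundLoop len ω u v (len u)) (fundLoop len ω u v (len u + 1)) = A u v := by
    simp only [fundLoop]
    rw [if_pos (le_refl (len u)), if_neg (by omega : ¬ (len u + 1 ≤ len u))]
    simp [hu, hv]
  have e3 : List.map ((fun t => A (fundLoop len ω u v t) (fundLoop len ω u v (t+1)))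
        ∘ (fun x => (len u + 1) + x)) (List.range (len v))
      = List.map (fun t => A (ω v (len v - t)) (ω v (len v - (t+1)))) (List.range (len v)) := by
    apply List.map_congr_left
    intro j hj
    rw [List.mem_range] at hj
    simp only [Function.comp_apply, fundLoop]
    rw [if_neg (by omega : ¬ (len u + 1 + j ≤ len u)),
      if_neg (by omega : ¬ (len u + 1 + j + 1 ≤ len u)),
      show len u + 1 + j - (len u + 1) = j from by omega,
      show len u + 1 + j + 1 - (len u + 1) = j + 1 from by omega]
  rw [pathOp, pathOp, pathOp, List.range_add, List.range_succ, List.map_append, List.map_append,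
    List.prod_append, List.prod_append, List.map_map, List.map_singleton, List.prod_singleton,
    e1, e2, e3, smul_mul_smul_comm, smul_mul_smul_comm]
  congr 1
  rw [pow_add, pow_add, pow_one]

set_option linter.unusedSectionVars false

lemma exp_eq {a b x y : V} (h1 : a ≠ b) (h2 : x ≠ y) (h3 : ¬(a = x ∧ b = y))
    (h4 : ¬(a = y ∧ b = x)) :
    ((if a = x ∨ a = y then (1:ℕ) else 0) + (if b = x ∨ b = y then 1 else 0))
      = ((if x = a ∨ x = b then 1 else 0) + (if y = a ∨ y = b then 1 else 0)) := by
  by_cases e1 : a = x <;> by_cases e2 : a = y <;> by_cases e3 : b = x <;> by_cases e4 : b = y <;>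
    simp_all [eq_comm]

lemma factor_comm
    (hsq : ∀ j k, G.Adj j k → A j k * A j k = 1)
    (hanti : ∀ j k, G.Adj j k → A k j = - A j k)
    (hcomm : ∀ j k j' k', G.Adj j k → G.Adj j' k' → s(j, k) ≠ s(j', k') →
      A j k * A j' k' =
        ((-1 : ℂ) ^ ((if j = j' ∨ j = k' then 1 else 0) + (if k = j' ∨ k = k' then 1 else 0))) •
          (A j' k' * A j k))
    {a b x y : V} (hab : G.Adj a b) (hxy : G.Adj x y) :
    A a b * A x y =
      ((-1 : ℂ) ^ ((if x = a ∨ x = b then 1 else 0) + (if y = a ∨ y = b then 1 else 0))) •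
        (A x y * A a b) := by
  by_cases hs : s(a, b) = s(x, y)
  · rw [Sym2.eq_iff] at hs
    rcases hs with ⟨rfl, rfl⟩ | ⟨rfl, rfl⟩
    · simp
    · have h1 : ((if b = a ∨ b = b then (1:ℕ) else 0) + (if a = a ∨ a = b then 1 else 0)) = 2 := by
        simp
      rw [h1, hanti a b hab]
      norm_num
  · have h1 : a ≠ b := hab.ne
    have h2 : x ≠ y := hxy.ne
    have h3 : ¬ (a = x ∧ b = y) := fun ⟨h, h'⟩ => hs (by rw [h, h'])
    have h4 : ¬ (a = y ∧ b = x) := fun ⟨h, h'⟩ => hs (by rw [h, h']; exact Sym2.eq_swap)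
    rw [hcomm a b x y hab hxy hs, exp_eq h1 h2 h3 h4]

lemma sign_comm
    (hsq : ∀ j k, G.Adj j k → A j k * A j k = 1)
    (hanti : ∀ j k, G.Adj j k → A k j = - A j k)
    (hcomm : ∀ j k j' k', G.Adj j k → G.Adj j' k' → s(j, k) ≠ s(j', k') →
      A j k * A j' k' =
        ((-1 : ℂ) ^ ((if j = j' ∨ j = k' then 1 else 0) + (if k = j' ∨ k = k' then 1 else 0))) •
          (A j' k' * A j k))
    {a b : V} (hab : G.Adj a b) :
    ∀ (s : ℕ) (ζ : ℕ → V), IsPathIn G s ζ →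
      A a b * pathOp A s ζ =
        ((-1 : ℂ) ^ (∑ t ∈ Finset.range s,
            ((if ζ t = a ∨ ζ t = b then 1 else 0) +
              (if ζ (t+1) = a ∨ ζ (t+1) = b then 1 else 0)))) •
          (pathOp A s ζ * A a b) := by
  intro s
  induction s with
  | zero => intro ζ _; simp [pathOp]
  | succ s ih =>
    intro ζ hζ
    have hpath : IsPathIn G s ζ := fun t ht => hζ t (by omega)
    have hadj : G.Adj (ζ s) (ζ (s+1)) := hζ s (by omega)
    rw [pathOp_succ_back, Finset.sum_range_succ, pow_add, ← mul_assoc, ih ζ hpath,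
      smul_mul_assoc, mul_assoc, mul_smul_comm, factor_comm A hsq hanti hcomm hab hadj]
    simp only [smul_smul, mul_smul_comm, smul_mul_assoc, mul_assoc]
    congr 1
    ring
lemma sum_even (s : ℕ) (f : ℕ → ℕ) (h : f s = f 0) :
    Even (∑ t ∈ Finset.range s, (f t + f (t+1))) := by
  have h1 : ∑ t ∈ Finset.range s, (f t + f (t+1))
      = ∑ t ∈ Finset.range s, f t + ∑ t ∈ Finset.range s, f (t+1) := Finset.sum_add_distrib
  have h2 : ∑ t ∈ Finset.range s, f (t+1) + f 0 = ∑ t ∈ Finset.range s, f t + f s := by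
    rw [← Finset.sum_range_succ', Finset.sum_range_succ]
  exact ⟨∑ t ∈ Finset.range s, f t, by omega⟩

lemma commute_edge
    (hsq : ∀ j k, G.Adj j k → A j k * A j k = 1)
    (hanti : ∀ j k, G.Adj j k → A k j = - A j k)
    (hcomm : ∀ j k j' k', G.Adj j k → G.Adj j' k' → s(j, k) ≠ s(j', k') →
      A j k * A j' k' =
        ((-1 : ℂ) ^ ((if j = j' ∨ j = k' then 1 else 0) + (if k = j' ∨ k = k' then 1 else 0))) •
          (A j' k' * A j k))
    {a b : V} (hab : G.Adj a b) {s : ℕ} {ζ : ℕ → V} (hζ : IsPathIn G s ζ)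
    (hloop : ζ s = ζ 0) :
    Commute (A a b) (pathOp A s ζ) := by
  have hsign := sign_comm A hsq hanti hcomm hab s ζ hζ
  have heven : Even (∑ t ∈ Finset.range s,
      ((if ζ t = a ∨ ζ t = b then 1 else 0) +
        (if ζ (t+1) = a ∨ ζ (t+1) = b then 1 else 0))) :=
    sum_even s (fun t => if ζ t = a ∨ ζ t = b then 1 else 0) (by beta_reduce; rw [hloop])
  rw [heven.neg_one_pow, one_smul] at hsign
  exact hsign

lemma commute_pathOp
    (hsq : ∀ j k, G.Adj j k → A j k * A j k = 1)
    (hanti : ∀ j k, G.Adj j k → A k j = - A j k)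
    (hcomm : ∀ j k j' k', G.Adj j k → G.Adj j' k' → s(j, k) ≠ s(j', k') →
      A j k * A j' k' =
        ((-1 : ℂ) ^ ((if j = j' ∨ j = k' then 1 else 0) + (if k = j' ∨ k = k' then 1 else 0))) •
          (A j' k' * A j k))
    {n : ℕ} {η : ℕ → V} (hη : IsPathIn G n η)
    {s : ℕ} {ζ : ℕ → V} (hζ : IsPathIn G s ζ) (hloop : ζ s = ζ 0) :
    Commute (pathOp A n η) (pathOp A s ζ) := by
  rw [pathOp]
  apply Commute.smul_left
  apply Commute.list_prod_left
  intro x hx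
  rw [List.mem_map] at hx
  obtain ⟨t, ht, rfl⟩ := hx
  rw [List.mem_range] at ht
  exact commute_edge A hsq hanti hcomm (hη t ht) hζ hloop
lemma telescope
    (hsq : ∀ j k, G.Adj j k → A j k * A j k = 1)
    (hanti : ∀ j k, G.Adj j k → A k j = - A j k)
    (len : V → ℕ) (ω : V → ℕ → V)
    (hωend : ∀ j, ω j (len j) = j)
    (hωG : ∀ j, IsPathIn G (len j) (ω j)) :
    ∀ (s : ℕ) (ζ : ℕ → V), IsPathIn G s ζ →
      ((List.range s).map (fun t =>
          pathOp A (len (ζ t) + 1 + len (ζ (t+1))) (fundLoop len ω (ζ t) (ζ (t+1))))).prod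
        = pathOp A (len (ζ 0)) (ω (ζ 0)) * pathOp A s ζ *
            pathOp A (len (ζ s)) (fun t => ω (ζ s) (len (ζ s) - t)) := by
  intro s
  induction s with
  | zero =>
    intro ζ _
    rw [List.range_zero, List.map_nil, List.prod_nil, pathOp_zero, mul_one,
      mul_eq_one_comm.mp (rev_mul A hsq hanti (len (ζ 0)) (ω (ζ 0)) (hωG (ζ 0)))]
  | succ s ih =>
    intro ζ hζ
    have hpath : IsPathIn G s ζ := fun t ht => hζ t (by omega)
    rw [List.range_succ, List.map_append, List.prod_append, List.map_singleton,
      List.prod_singleton, ih ζ hpath,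
      fund_decomp A len ω (ζ s) (ζ (s+1)) (hωend (ζ s)) (hωend (ζ (s+1)))]
    calc pathOp A (len (ζ 0)) (ω (ζ 0)) * pathOp A s ζ *
            pathOp A (len (ζ s)) (fun t => ω (ζ s) (len (ζ s) - t)) *
          (pathOp A (len (ζ s)) (ω (ζ s)) * (Complex.I • A (ζ s) (ζ (s+1))) *
            pathOp A (len (ζ (s+1))) (fun t => ω (ζ (s+1)) (len (ζ (s+1)) - t)))
        = pathOp A (len (ζ 0)) (ω (ζ 0)) * (pathOp A s ζ *
            ((pathOp A (len (ζ s)) (fun t => ω (ζ s) (len (ζ s) - t)) *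
              pathOp A (len (ζ s)) (ω (ζ s))) *
            ((Complex.I • A (ζ s) (ζ (s+1))) *
              pathOp A (len (ζ (s+1))) (fun t => ω (ζ (s+1)) (len (ζ (s+1)) - t))))) := by
          simp only [mul_assoc]
      _ = pathOp A (len (ζ 0)) (ω (ζ 0)) * (pathOp A s ζ *
            ((Complex.I • A (ζ s) (ζ (s+1))) *
              pathOp A (len (ζ (s+1))) (fun t => ω (ζ (s+1)) (len (ζ (s+1)) - t)))) := by
          rw [rev_mul A hsq hanti (len (ζ s)) (ω (ζ s)) (hωG (ζ s)), one_mul]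
      _ = pathOp A (len (ζ 0)) (ω (ζ 0)) * pathOp A (s+1) ζ *
            pathOp A (len (ζ (s+1))) (fun t => ω (ζ (s+1)) (len (ζ (s+1)) - t)) := by
          rw [pathOp_succ_back]
          simp only [mul_assoc]
end Aux

noncomputable def wOp {V : Type*} {N : ℕ} (A : V → V → Matrix (Fin N) (Fin N) ℂ)
    {T : SimpleGraph V} : ∀ {x y : V}, T.Walk x y → Matrix (Fin N) (Fin N) ℂ
  | _, _, SimpleGraph.Walk.nil => 1
  | _, _, SimpleGraph.Walk.cons (u := x) (v := z) _ p => (Complex.I • A x z) * wOp A p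

@[simp] lemma wOp_nil {V : Type*} {N : ℕ} (A : V → V → Matrix (Fin N) (Fin N) ℂ)
    {T : SimpleGraph V} {x : V} : wOp A (SimpleGraph.Walk.nil : T.Walk x x) = 1 := rfl

@[simp] lemma wOp_cons {V : Type*} {N : ℕ} (A : V → V → Matrix (Fin N) (Fin N) ℂ)
    {T : SimpleGraph V} {x z y : V} (h : T.Adj x z) (p : T.Walk z y) :
    wOp A (SimpleGraph.Walk.cons h p) = (Complex.I • A x z) * wOp A p := rfl

def walkOf {V : Type*} (T : SimpleGraph V) :
    (s : ℕ) → (ζ : ℕ → V) → IsPathIn T s ζ → T.Walk (ζ 0) (ζ s)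
  | 0, _, _ => SimpleGraph.Walk.nil
  | s+1, ζ, h => SimpleGraph.Walk.cons (h 0 (by omega))
      (walkOf T s (fun t => ζ (t+1)) (fun t ht => h (t+1) (by omega)))

lemma pathOp_eq_wOp {V : Type*} [DecidableEq V] {N : ℕ} (A : V → V → Matrix (Fin N) (Fin N) ℂ)
    {T : SimpleGraph V} :
    ∀ (s : ℕ) (ζ : ℕ → V) (h : IsPathIn T s ζ), pathOp A s ζ = wOp A (walkOf T s ζ h) := by
  intro s
  induction s with
  | zero => intro ζ h; rw [pathOp_zero]; rfl
  | succ s ih =>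
    intro ζ h
    rw [pathOp_succ_front, ih (fun t => ζ (t+1)) (fun t ht => h (t+1) (by omega))]
    rfl

lemma wOp_eq_of_isPath {V : Type*} [DecidableEq V] {N : ℕ}
    (A : V → V → Matrix (Fin N) (Fin N) ℂ) {G T : SimpleGraph V}
    (hT : T.IsAcyclic) (hTG : T ≤ G)
    (hsq : ∀ j k, G.Adj j k → A j k * A j k = 1)
    (hanti : ∀ j k, G.Adj j k → A k j = - A j k) :
    ∀ {x y : V} (w : T.Walk x y) (p : T.Walk x y), p.IsPath → wOp A w = wOp A p := by
  intro x y w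
  induction w with
  | nil =>
    intro p hp
    have hpath : (⟨p, hp⟩ : T.Path _ _) = ⟨SimpleGraph.Walk.nil, SimpleGraph.Walk.IsPath.nil⟩ :=
      SimpleGraph.isAcyclic_iff_path_unique.mp hT _ _
    have hp' : p = SimpleGraph.Walk.nil := congrArg Subtype.val hpath
    rw [hp']
  | @cons x c y h q ih =>
    intro p hp
    have hq : q.bypass.IsPath := SimpleGraph.Walk.bypass_isPath q
    rw [wOp_cons, ih q.bypass hq]
    by_cases hx : x ∈ q.bypass.support
    · have htake : (q.bypass.takeUntil x hx).IsPath := hq.takeUntil hx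
      have hsingle : (SimpleGraph.Walk.cons h.symm SimpleGraph.Walk.nil : T.Walk c x).IsPath := by
        rw [SimpleGraph.Walk.cons_isPath_iff]
        exact ⟨SimpleGraph.Walk.IsPath.nil, by simp [h.ne']⟩
      have huniq : (⟨q.bypass.takeUntil x hx, htake⟩ : T.Path c x)
          = ⟨SimpleGraph.Walk.cons h.symm SimpleGraph.Walk.nil, hsingle⟩ :=
        SimpleGraph.isAcyclic_iff_path_unique.mp hT _ _
      have htake' : q.bypass.takeUntil x hx = SimpleGraph.Walk.cons h.symm SimpleGraph.Walk.nil :=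
        congrArg Subtype.val huniq
      have hspec : q.bypass
          = SimpleGraph.Walk.cons h.symm (q.bypass.dropUntil x hx) := by
        conv_lhs => rw [← SimpleGraph.Walk.take_spec q.bypass hx]
        rw [htake']
        rfl
      have hdrop : (q.bypass.dropUntil x hx).IsPath := hq.dropUntil hx
      have hpd : p = q.bypass.dropUntil x hx := congrArg Subtype.val
        (SimpleGraph.isAcyclic_iff_path_unique.mp hT ⟨p, hp⟩ ⟨_, hdrop⟩)
      rw [hspec, wOp_cons, ← mul_assoc, edge_cancel A hsq hanti (hTG h), one_mul, hpd]
    · have hcons : (SimpleGraph.Walk.cons h q.bypass).IsPath :=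
        (SimpleGraph.Walk.cons_isPath_iff h q.bypass).mpr ⟨hq, hx⟩
      have huniq : (⟨p, hp⟩ : T.Path x y) = ⟨SimpleGraph.Walk.cons h q.bypass, hcons⟩ :=
        SimpleGraph.isAcyclic_iff_path_unique.mp hT _ _
      have hp' : p = SimpleGraph.Walk.cons h q.bypass := congrArg Subtype.val huniq
      rw [hp', wOp_cons]

lemma wOp_closed {V : Type*} [DecidableEq V] {N : ℕ}
    (A : V → V → Matrix (Fin N) (Fin N) ℂ) {G T : SimpleGraph V}
    (hT : T.IsAcyclic) (hTG : T ≤ G)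
    (hsq : ∀ j k, G.Adj j k → A j k * A j k = 1)
    (hanti : ∀ j k, G.Adj j k → A k j = - A j k)
    {x y : V} (w : T.Walk x y) (hxy : y = x) : wOp A w = 1 := by
  subst hxy
  rw [wOp_eq_of_isPath A hT hTG hsq hanti w SimpleGraph.Walk.nil SimpleGraph.Walk.IsPath.nil,
    wOp_nil]

lemma fundLoop_pathIn {V : Type*} {T : SimpleGraph V} (len : V → ℕ) (ω : V → ℕ → V)
    (hωend : ∀ j, ω j (len j) = j)
    (hωpath : ∀ j, ∀ t < len j, T.Adj (ω j t) (ω j (t + 1)))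
    {u v : V} (huv : T.Adj u v) :
    IsPathIn T (len u + 1 + len v) (fundLoop len ω u v) := by
  intro t ht
  rcases lt_trichotomy t (len u) with h | h | h
  · have e1 : fundLoop len ω u v t = ω u t := if_pos (by omega)
    have e2 : fundLoop len ω u v (t+1) = ω u (t+1) := if_pos (by omega)
    rw [e1, e2]
    exact hωpath u t h
  · have e1 : fundLoop len ω u v t = ω u t := if_pos (by omega)
    have e2 : fundLoop len ω u v (t+1) = ω v (len v - (t + 1 - (len u + 1))) :=
      if_neg (by omega)
    rw [e1, e2, h, hωend u, show len u + 1 - (len u + 1) = 0 from by omega, Nat.sub_zero, hωend v]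
    exact huv
  · have e1 : fundLoop len ω u v t = ω v (len v - (t - (len u + 1))) := if_neg (by omega)
    have e2 : fundLoop len ω u v (t+1) = ω v (len v - (t + 1 - (len u + 1))) :=
      if_neg (by omega)
    rw [e1, e2]
    have hj : t - (len u + 1) < len v := by omega
    have i1 : len v - (t - (len u + 1)) = (len v - (t + 1 - (len u + 1))) + 1 := by omega
    rw [i1]
    exact (hωpath v (len v - (t + 1 - (len u + 1))) (by omega)).symm

lemma fund_tree {V : Type*} [DecidableEq V] {N : ℕ}
    (A : V → V → Matrix (Fin N) (Fin N) ℂ) {G T : SimpleGraph V}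
    (hT : T.IsAcyclic) (hTG : T ≤ G)
    (hsq : ∀ j k, G.Adj j k → A j k * A j k = 1)
    (hanti : ∀ j k, G.Adj j k → A k j = - A j k)
    (r : V) (len : V → ℕ) (ω : V → ℕ → V)
    (hω0 : ∀ j, ω j 0 = r) (hωend : ∀ j, ω j (len j) = j)
    (hωpath : ∀ j, ∀ t < len j, T.Adj (ω j t) (ω j (t + 1)))
    {u v : V} (huv : T.Adj u v) :
    pathOp A (len u + 1 + len v) (fundLoop len ω u v) = 1 := by
  have hP : IsPathIn T (len u + 1 + len v) (fundLoop len ω u v) :=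
    fundLoop_pathIn len ω hωend hωpath huv
  rw [pathOp_eq_wOp A _ _ hP]
  apply wOp_closed A hT hTG hsq hanti
  have h0 : fundLoop len ω u v 0 = r := by
    rw [show fundLoop len ω u v 0 = ω u 0 from if_pos (by omega), hω0 u]
  have hL : fundLoop len ω u v (len u + 1 + len v) = r := by
    rw [show fundLoop len ω u v (len u + 1 + len v)
        = ω v (len v - (len u + 1 + len v - (len u + 1))) from if_neg (by omega),
      show len v - (len u + 1 + len v - (len u + 1)) = 0 from by omega, hω0 v]
  rw [h0, hL]

theorem stmt7 {V : Type*} [Fintype V] [DecidableEq V] (G : SimpleGraph V) {N : ℕ}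
    (A : V → V → Matrix (Fin N) (Fin N) ℂ)
    (hherm : ∀ j k, G.Adj j k → (A j k)ᴴ = A j k)
    (hsq : ∀ j k, G.Adj j k → A j k * A j k = 1)
    (hanti : ∀ j k, G.Adj j k → A k j = - A j k)
    (hcomm : ∀ j k j' k', G.Adj j k → G.Adj j' k' → s(j, k) ≠ s(j', k') →
      A j k * A j' k' =
        ((-1 : ℂ) ^ ((if j = j' ∨ j = k' then 1 else 0) + (if k = j' ∨ k = k' then 1 else 0))) •
          (A j' k' * A j k))
    (hGconn : G.Connected)
    -- a spanning tree T of G with root r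
    (T : SimpleGraph V) (hTG : T ≤ G) (hTtree : T.IsTree) (r : V)
    -- ω j is the (unique) path in T from the root r to j, of length len j
    (len : V → ℕ) (ω : V → ℕ → V)
    (hω0 : ∀ j, ω j 0 = r) (hωend : ∀ j, ω j (len j) = j)
    (hωpath : ∀ j, ∀ t < len j, T.Adj (ω j t) (ω j (t + 1))) :
    -- every loop operator factors into the fundamental loop operators of its edges
    (∀ s ζ, IsPathIn G s ζ → ζ s = ζ 0 →
      pathOp A s ζ =
        (((List.range s).map (fun t =>
          pathOp A (len (ζ t) + 1 + len (ζ (t + 1)))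
            (fundLoop len ω (ζ t) (ζ (t + 1))))).prod)) ∧
    -- fundamental loop operators of tree edges are trivial
    (∀ u v, T.Adj u v → pathOp A (len u + 1 + len v) (fundLoop len ω u v) = 1) ∧
    -- consequently every loop operator lies in the subgroup generated by the
    -- fundamental loop operators of the non-tree edges
    (∀ s ζ, IsPathIn G s ζ → ζ s = ζ 0 →
      pathOp A s ζ ∈ Submonoid.closure
        {M | ∃ u v, G.Adj u v ∧ ¬ T.Adj u v ∧
          M = pathOp A (len u + 1 + len v) (fundLoop len ω u v)}) := by
  have hωG : ∀ j, IsPathIn G (len j) (ω j) := fun j t ht => hTG (hωpath j t ht)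
  have part1 : ∀ s ζ, IsPathIn G s ζ → ζ s = ζ 0 →
      pathOp A s ζ =
        (((List.range s).map (fun t =>
          pathOp A (len (ζ t) + 1 + len (ζ (t + 1)))
            (fundLoop len ω (ζ t) (ζ (t + 1))))).prod) := by
    intro s ζ hζ hloop
    rw [telescope A hsq hanti len ω hωend hωG s ζ hζ, hloop]
    have hcom : Commute (pathOp A (len (ζ 0)) (ω (ζ 0))) (pathOp A s ζ) :=
      commute_pathOp A hsq hanti hcomm (hωG (ζ 0)) hζ hloop
    rw [hcom.eq, mul_assoc,
      mul_eq_one_comm.mp (rev_mul A hsq hanti (len (ζ 0)) (ω (ζ 0)) (hωG (ζ 0))),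
      mul_one]
  have part2 : ∀ u v, T.Adj u v → pathOp A (len u + 1 + len v) (fundLoop len ω u v) = 1 :=
    fun u v huv => fund_tree A hTtree.IsAcyclic hTG hsq hanti r len ω hω0 hωend hωpath huv
  refine ⟨part1, part2, ?_⟩
  intro s ζ hζ hloop
  rw [part1 s ζ hζ hloop]
  apply Submonoid.list_prod_mem
  intro x hx
  rw [List.mem_map] at hx
  obtain ⟨t, ht, rfl⟩ := hx
  rw [List.mem_range] at ht
  by_cases hT' : T.Adj (ζ t) (ζ (t+1))
  · rw [part2 (ζ t) (ζ (t+1)) hT']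
    exact Submonoid.one_mem _
  · exact Submonoid.subset_closure ⟨ζ t, ζ (t+1), hζ t ht, hT', rfl⟩
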